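/- Let A be a J×I nonnegative matrix with all column sums ≤ 1 and q ∈ ℝ^I_{>0}, and suppose the GIS(1) iterates δ^{(n)} (defined by δ^{(0)}=1, δ^{(n+1)}_i = δ^{(n)}_i Π_j (A_j q/A_j δ^{(n)})^{a_{ji}}) all satisfy A_j δ^{(n)} > 0. Then D(A q, A δ^{(n)}) → 0 as n → ∞, where D is the Bregman divergence in ℝ^J. -/

import Mathlib

open Finset Real Filter

lemma bregman_term_nonneg {s t : ℝ} (hs : 0 < s) (ht : 0 < t) :
    0 ≤ s * Real.log (s / t) - (s - t) := by
  have h : Real.log (t / s) ≤ t / s - 1 := Real.log_le_sub_one_of_pos (div_pos ht hs)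
  have hlog : Real.log (s / t) = - Real.log (t / s) := by
    rw [← Real.log_inv]; congr 1; field_simp
  rw [hlog]
  nlinarith [mul_le_mul_of_nonneg_left h hs.le, mul_div_cancel₀ t hs.ne']

lemma amgm_subprob {J : ℕ} (w x : Fin J → ℝ) (hw : ∀ j, 0 ≤ w j)
    (hw1 : ∑ j, w j ≤ 1) (hx : ∀ j, 0 < x j) :
    (∏ j, x j ^ (w j)) ≤ ∑ j, w j * x j + (1 - ∑ j, w j) := by
  have key := Real.geom_mean_le_arith_mean_weighted (Finset.univ : Finset (Option (Fin J)))
    (fun o => o.elim (1 - ∑ j, w j) w) (fun o => o.elim 1 x)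
    (by rintro (_|j) _ <;> simp [hw, sub_nonneg.2 hw1])
    (by simp [Fintype.sum_option])
    (by rintro (_|j) _ <;> simp [(hx _).le])
  simpa [Fintype.prod_option, Fintype.sum_option, Real.one_rpow, add_comm] using key

/-- Along the GIS(1) sequence, the Bregman divergence between the sufficient
statistics, `D(Aq, Aδ⁽ⁿ⁾)`, converges to `0`. -/
theorem gis_bregman_suff_stat_tendsto_zero (J I : ℕ) (A : Fin J → Fin I → ℝ)
    (hA : ∀ j i, 0 ≤ A j i) (hcol : ∀ i, (∑ j, A j i) ≤ 1)
    (q : Fin I → ℝ) (hq : ∀ i, 0 < q i)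
    (δ : ℕ → Fin I → ℝ) (hδ0 : ∀ i, δ 0 i = 1)
    (hpos : ∀ n j, 0 < ∑ i, A j i * δ n i)
    (hrec : ∀ n i, δ (n + 1) i =
      δ n i * ∏ j, ((∑ i', A j i' * q i') / (∑ i', A j i' * δ n i')) ^ (A j i)) :
    Tendsto (fun n =>
      (∑ j, (∑ i, A j i * q i) *
          Real.log ((∑ i, A j i * q i) / (∑ i, A j i * δ n i)))
        - ((∑ j, ∑ i, A j i * q i) - (∑ j, ∑ i, A j i * δ n i)))
      atTop (nhds 0) := by
  set s : Fin J → ℝ := fun j => ∑ i, A j i * q i with hs_def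
  set t : ℕ → Fin J → ℝ := fun n j => ∑ i, A j i * δ n i with ht_def
  have ht : ∀ n j, 0 < t n j := hpos
  have hs : ∀ j, 0 < s j := by
    intro j
    have h0 : 0 < ∑ i, A j i := by simpa [ht_def, hδ0] using hpos 0 j
    obtain ⟨i, hi⟩ : ∃ i, 0 < A j i := by
      by_contra h; push_neg at h
      have : ∑ i, A j i ≤ 0 := Finset.sum_nonpos fun i _ => h i
      linarith
    exact Finset.sum_pos' (fun i _ => mul_nonneg (hA j i) (hq i).le)
      ⟨i, Finset.mem_univ i, mul_pos hi (hq i)⟩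
  have hr : ∀ n j, 0 < s j / t n j := fun n j => div_pos (hs j) (ht n j)
  have hδpos : ∀ n i, 0 < δ n i := by
    intro n
    induction n with
    | zero => intro i; simp [hδ0]
    | succ n ih =>
      intro i
      rw [hrec]
      exact mul_pos (ih i)
        (Finset.prod_pos fun j _ => Real.rpow_pos_of_pos (hr n j) _)
  -- the target function and the Lyapunov function
  set F : ℕ → ℝ := fun n =>
    (∑ j, s j * Real.log (s j / t n j)) - ((∑ j, s j) - ∑ j, t n j) with hF_def
  set d : ℕ → ℝ := fun n =>
    (∑ i, q i * Real.log (q i / δ n i)) - (∑ i, q i) + ∑ i, δ n i with hd_def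
  have hF0 : ∀ n, 0 ≤ F n := by
    intro n
    have : F n = ∑ j, (s j * Real.log (s j / t n j) - (s j - t n j)) := by
      simp [hF_def, Finset.sum_sub_distrib]
    rw [this]
    exact Finset.sum_nonneg fun j _ => bregman_term_nonneg (hs j) (ht n j)
  have hd0 : ∀ n, 0 ≤ d n := by
    intro n
    have : d n = ∑ i, (q i * Real.log (q i / δ n i) - (q i - δ n i)) := by
      simp [hd_def, Finset.sum_sub_distrib]; ring
    rw [this]
    exact Finset.sum_nonneg fun i _ => bregman_term_nonneg (hq i) (hδpos n i)
  -- log of the update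
  have hlogδ : ∀ n i, Real.log (δ (n + 1) i)
      = Real.log (δ n i) + ∑ j, A j i * Real.log (s j / t n j) := by
    intro n i
    rw [hrec]
    rw [Real.log_mul (hδpos n i).ne'
      (Finset.prod_pos fun j _ => Real.rpow_pos_of_pos (hr n j) _).ne']
    congr 1
    rw [Real.log_prod (fun j _ => (Real.rpow_pos_of_pos (hr n j) _).ne')]
    exact Finset.sum_congr rfl fun j _ => Real.log_rpow (hr n j) _
  -- Claim A
  have hClaimA : ∀ n, (∑ i, q i * Real.log (q i / δ n i))
      - (∑ i, q i * Real.log (q i / δ (n + 1) i))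
      = ∑ j, s j * Real.log (s j / t n j) := by
    intro n
    rw [← Finset.sum_sub_distrib]
    have hterm : ∀ i, q i * Real.log (q i / δ n i) - q i * Real.log (q i / δ (n + 1) i)
        = ∑ j, A j i * q i * Real.log (s j / t n j) := by
      intro i
      rw [Real.log_div (hq i).ne' (hδpos n i).ne',
        Real.log_div (hq i).ne' (hδpos (n + 1) i).ne', hlogδ n i]
      have : q i * (Real.log (q i) - Real.log (δ n i))
          - q i * (Real.log (q i) - (Real.log (δ n i) + ∑ j, A j i * Real.log (s j / t n j)))
          = q i * ∑ j, A j i * Real.log (s j / t n j) := by ring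
      rw [this, Finset.mul_sum]
      exact Finset.sum_congr rfl fun j _ => by ring
    simp only [hterm]
    rw [Finset.sum_comm]
    exact Finset.sum_congr rfl fun j _ => by
      rw [hs_def, Finset.sum_mul]
  -- Claim B
  have hClaimB : ∀ n, ∑ i, δ (n + 1) i ≤ (∑ j, s j) + ((∑ i, δ n i) - ∑ j, t n j) := by
    intro n
    have hper : ∀ i, δ (n + 1) i ≤
        (∑ j, A j i * δ n i * (s j / t n j)) + δ n i - ∑ j, A j i * δ n i := by
      intro i
      have am := amgm_subprob (fun j => A j i) (fun j => s j / t n j)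
        (fun j => hA j i) (hcol i) (fun j => hr n j)
      calc δ (n + 1) i = δ n i * ∏ j, (s j / t n j) ^ (A j i) := hrec n i
        _ ≤ δ n i * (∑ j, A j i * (s j / t n j) + (1 - ∑ j, A j i)) :=
            mul_le_mul_of_nonneg_left am (hδpos n i).le
        _ = (∑ j, A j i * δ n i * (s j / t n j)) + δ n i - ∑ j, A j i * δ n i := by
            rw [mul_add, Finset.mul_sum, mul_one_sub, Finset.mul_sum]
            rw [show (∑ j, δ n i * (A j i * (s j / t n j)))
                = ∑ j, A j i * δ n i * (s j / t n j) from
              Finset.sum_congr rfl fun j _ => by ring]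
            rw [show (∑ j, δ n i * A j i) = ∑ j, A j i * δ n i from
              Finset.sum_congr rfl fun j _ => by ring]
            ring
    have hsum := Finset.sum_le_sum (fun i (_ : i ∈ Finset.univ) => hper i)
    have e1 : ∑ i, ∑ j, A j i * δ n i * (s j / t n j) = ∑ j, s j := by
      rw [Finset.sum_comm]
      refine Finset.sum_congr rfl fun j _ => ?_
      rw [← Finset.sum_mul]
      rw [show (∑ i, A j i * δ n i) = t n j from rfl, mul_comm]
      exact div_mul_cancel₀ _ (ht n j).ne'
    have e2 : ∑ i, ∑ j, A j i * δ n i = ∑ j, t n j := by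
      rw [Finset.sum_comm]
    calc ∑ i, δ (n + 1) i
        ≤ ∑ i, ((∑ j, A j i * δ n i * (s j / t n j)) + δ n i - ∑ j, A j i * δ n i) := hsum
      _ = (∑ i, ∑ j, A j i * δ n i * (s j / t n j)) + (∑ i, δ n i)
          - ∑ i, ∑ j, A j i * δ n i := by
          rw [Finset.sum_sub_distrib, Finset.sum_add_distrib]
      _ = (∑ j, s j) + ((∑ i, δ n i) - ∑ j, t n j) := by rw [e1, e2]; ring
  -- key inequality
  have hkey : ∀ n, F n ≤ d n - d (n + 1) := by
    intro n
    have hA' := hClaimA n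
    have hB' := hClaimB n
    simp only [hF_def, hd_def]
    linarith
  have hant : Antitone d := antitone_nat_of_succ_le fun n => by linarith [hkey n, hF0 n]
  have hbdd : BddBelow (Set.range d) := ⟨0, by rintro x ⟨n, rfl⟩; exact hd0 n⟩
  have hconv : Tendsto d atTop (nhds (⨅ n, d n)) := tendsto_atTop_ciInf hant hbdd
  have hconv' : Tendsto (fun n => d (n + 1)) atTop (nhds (⨅ n, d n)) :=
    hconv.comp (tendsto_add_atTop_nat 1)
  have hdiff : Tendsto (fun n => d n - d (n + 1)) atTop (nhds 0) := by
    simpa using hconv.sub hconv'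
  exact squeeze_zero hF0 hkey hdiff
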